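/- Let n : ℕ and let λ be a multiset of positive natural numbers with sum n. The number of set partitions (Finpartitions) of the n-element set Fin n whose multiset of block cardinalities equals λ is n! / ((∏_{parts s of λ} s!) · (∏_{distinct sizes s} (count of s in λ)!)). (Proposition 'Multiplicity of a fixed block profile'.) -/

import Mathlib

open Finset
namespace Stmt18Aux

open Finset



/-- Equivalence between fiber-preserving equivalences and families of fiber equivalences. -/
def equivCommEquiv {γ δ I : Type*} (f : γ → I) (g : δ → I) :
    {e : γ ≃ δ // ∀ x, g (e x) = f x} ≃ ∀ i, {x // f x = i} ≃ {y // g y = i} where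
  toFun e i :=
    { toFun := fun x => ⟨e.1 x.1, by rw [e.2, x.2]⟩
      invFun := fun y => ⟨e.1.symm y.1, by
        have h := e.2 (e.1.symm y.1)
        rw [Equiv.apply_symm_apply] at h
        rw [← h, y.2]⟩
      left_inv := fun x => Subtype.ext (e.1.symm_apply_apply x.1)
      right_inv := fun y => Subtype.ext (e.1.apply_symm_apply y.1) }
  invFun u := ⟨Equiv.ofFiberEquiv u, fun x => Equiv.ofFiberEquiv_map u x⟩
  left_inv e := by
    apply Subtype.ext
    apply Equiv.ext
    intro x
    simp [Equiv.ofFiberEquiv]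
  right_inv u := by
    funext i
    apply Equiv.ext
    rintro ⟨x, hx⟩
    apply Subtype.ext
    subst hx
    simp only [Equiv.ofFiberEquiv, Equiv.trans_apply, Equiv.sigmaCongrRight_apply]
    rfl

lemma card_equiv_comm {γ δ I : Type*} [Fintype γ] [Fintype δ] [Fintype I]
    [DecidableEq γ] [DecidableEq δ] [DecidableEq I] (f : γ → I) (g : δ → I)
    (h : ∀ i, Fintype.card {x // f x = i} = Fintype.card {y // g y = i}) :
    Fintype.card {e : γ ≃ δ // ∀ x, g (e x) = f x}
      = ∏ i : I, (Fintype.card {x // f x = i}).factorial := by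
  rw [Fintype.card_congr (equivCommEquiv f g), Fintype.card_pi]
  exact Finset.prod_congr rfl fun i _ =>
    Fintype.card_equiv (Fintype.equivOfCardEq (h i))





variable {n k : ℕ} {c : Fin k → ℕ}

/-- The `i`-th block of the equivalence `f`. -/
def blk (f : (Σ i : Fin k, Fin (c i)) ≃ Fin n) (i : Fin k) : Finset (Fin n) :=
  univ.image fun j : Fin (c i) => f ⟨i, j⟩

lemma mem_blk {f : (Σ i : Fin k, Fin (c i)) ≃ Fin n} {i : Fin k} {x : Fin n} :
    x ∈ blk f i ↔ (f.symm x).1 = i := by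
  simp only [blk, mem_image, mem_univ, true_and]
  constructor
  · rintro ⟨j, rfl⟩
    simp
  · intro h
    rcases hy : f.symm x with ⟨i', j'⟩
    rw [hy] at h
    cases h
    exact ⟨j', ((Equiv.symm_apply_eq f).mp hy).symm⟩

lemma card_blk (f : (Σ i : Fin k, Fin (c i)) ≃ Fin n) (i : Fin k) :
    (blk f i).card = c i := by
  rw [blk, Finset.card_image_of_injective _
    (show Function.Injective (fun j : Fin (c i) => f ⟨i, j⟩) from
      fun a b h => by simpa using sigma_mk_injective (f.injective h)),
    card_univ, Fintype.card_fin]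

lemma blk_disjoint (f : (Σ i : Fin k, Fin (c i)) ≃ Fin n) {i i' : Fin k} (h : i ≠ i') :
    Disjoint (blk f i) (blk f i') := by
  rw [Finset.disjoint_left]
  intro x hx hx'
  rw [mem_blk] at hx hx'
  exact h (hx ▸ hx')

lemma blk_nonempty (hc : ∀ i, 0 < c i) (f : (Σ i : Fin k, Fin (c i)) ≃ Fin n) (i : Fin k) :
    (blk f i).Nonempty := by
  rw [← Finset.card_pos, card_blk]; exact hc i

lemma blk_injective (hc : ∀ i, 0 < c i) (f : (Σ i : Fin k, Fin (c i)) ≃ Fin n) :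
    Function.Injective (blk f) := by
  intro i i' h
  by_contra hne
  have hd := blk_disjoint f hne
  rw [h] at hd
  exact (blk_nonempty hc f i').ne_empty (disjoint_self.mp hd)

/-- The partition of `Fin n` induced by `f`. -/
def pt (hc : ∀ i, 0 < c i) (f : (Σ i : Fin k, Fin (c i)) ≃ Fin n) :
    Finpartition (univ : Finset (Fin n)) where
  parts := univ.image (blk f)
  supIndep := by
    rw [Finset.supIndep_iff_pairwiseDisjoint]
    rintro a ha b hb hab
    simp only [coe_image, Set.mem_image, mem_coe, mem_univ, true_and, coe_univ,
      Set.image_univ, Set.mem_range] at ha hb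
    obtain ⟨i, rfl⟩ := ha
    obtain ⟨i', rfl⟩ := hb
    exact blk_disjoint f (fun h => hab (by rw [h]))
  sup_parts := by
    rw [Finset.sup_image]
    apply Finset.eq_univ_iff_forall.mpr
    intro x
    rw [Finset.mem_sup]
    exact ⟨(f.symm x).1, mem_univ _, mem_blk.mpr rfl⟩
  bot_notMem := by
    simp only [bot_eq_empty, mem_image, mem_univ, true_and, not_exists]
    intro i h
    exact (blk_nonempty hc f i).ne_empty h.symm.symm

lemma parts_pt (hc : ∀ i, 0 < c i) (f : (Σ i : Fin k, Fin (c i)) ≃ Fin n) :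
    (pt hc f).parts = univ.image (blk f) := rfl

lemma parts_pt_val (hc : ∀ i, 0 < c i) (f : (Σ i : Fin k, Fin (c i)) ≃ Fin n) :
    (pt hc f).parts.val = Multiset.map (blk f) univ.val :=
  Finset.image_val_of_injOn ((blk_injective hc f).injOn)

lemma profile_pt (hc : ∀ i, 0 < c i) (f : (Σ i : Fin k, Fin (c i)) ≃ Fin n) :
    (pt hc f).parts.val.map Finset.card = Multiset.map c univ.val := by
  rw [parts_pt_val, Multiset.map_map]
  exact Multiset.map_congr rfl fun i _ => card_blk f i



section Fiber

variable (hc : ∀ i : Fin k, 0 < c i) (P : Finpartition (univ : Finset (Fin n)))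

lemma parts_card (hP : P.parts.val.map Finset.card = Multiset.map c univ.val) :
    P.parts.card = k := by
  have := congrArg Multiset.card hP
  simpa using this

/-- Size-preserving bijections from indices to parts. -/
abbrev BP (c : Fin k → ℕ) (P : Finpartition (univ : Finset (Fin n))) :=
  {b : Fin k ≃ {t // t ∈ P.parts} // ∀ i, (b i).1.card = c i}

/-- The structured data of a fiber element. -/
abbrev SP (c : Fin k → ℕ) (P : Finpartition (univ : Finset (Fin n))) :=
  Σ b : BP c P, ∀ i : Fin k, Fin (c i) ≃ {x // x ∈ (b.1 i).1}

variable {P}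

def ΨG (σ : SP c P) : (Σ i : Fin k, Fin (c i)) → Fin n :=
  fun x => (σ.2 x.1 x.2).1

lemma ΨG_mem (σ : SP c P) (x : Σ i : Fin k, Fin (c i)) :
    ΨG σ x ∈ (σ.1.1 x.1).1 := (σ.2 x.1 x.2).2

lemma ΨG_bijective (σ : SP c P) : Function.Bijective (ΨG σ) := by
  constructor
  · rintro ⟨i, j⟩ ⟨i', j'⟩ h
    by_cases hii : i = i'
    · subst hii
      have : σ.2 i j = σ.2 i j' := Subtype.ext h
      rw [(σ.2 i).injective this]
    · exfalso
      have hne : σ.1.1 i ≠ σ.1.1 i' := fun hb => hii (σ.1.1.injective hb)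
      have hne' : (σ.1.1 i).1 ≠ (σ.1.1 i').1 := fun hb => hne (Subtype.ext hb)
      have hd := P.disjoint (σ.1.1 i).2 (σ.1.1 i').2 hne'
      have h1 := ΨG_mem σ ⟨i, j⟩
      have h2 := ΨG_mem σ ⟨i', j'⟩
      rw [h] at h1
      exact Finset.disjoint_left.mp hd h1 h2
  · intro x
    obtain ⟨t, ht, hxt⟩ := P.exists_mem (mem_univ x)
    obtain ⟨i, hi⟩ := σ.1.1.surjective ⟨t, ht⟩
    refine ⟨⟨i, (σ.2 i).symm ⟨x, by rw [hi]; exact hxt⟩⟩, ?_⟩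
    show ((σ.2 i) ((σ.2 i).symm _)).1 = x
    rw [Equiv.apply_symm_apply]

noncomputable def ΨF (σ : SP c P) : (Σ i : Fin k, Fin (c i)) ≃ Fin n :=
  Equiv.ofBijective _ (ΨG_bijective σ)

lemma blk_ΨF (σ : SP c P) (i : Fin k) : blk (ΨF σ) i = (σ.1.1 i).1 := by
  apply Finset.eq_of_subset_of_card_le
  · intro x hx
    obtain ⟨j, _, hj⟩ := mem_image.mp hx
    exact hj ▸ ΨG_mem σ ⟨i, j⟩
  · rw [card_blk, σ.1.2 i]

lemma pt_ΨF (hP : P.parts.val.map Finset.card = Multiset.map c univ.val)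
    (σ : SP c P) : pt hc (ΨF σ) = P := by
  ext1
  rw [parts_pt]
  have himg : univ.image (blk (ΨF σ)) = univ.image (fun i => (σ.1.1 i).1) :=
    Finset.image_congr fun i _ => blk_ΨF σ i
  rw [himg]
  apply Finset.eq_of_subset_of_card_le
  · intro t ht
    obtain ⟨i, _, hi⟩ := mem_image.mp ht
    exact hi ▸ (σ.1.1 i).2
  · rw [parts_card P hP, Finset.card_image_of_injective _
      (show Function.Injective (fun i : Fin k => ((σ.1.1 i : {t // t ∈ P.parts}) : Finset (Fin n)))
        from fun a b h => σ.1.1.injective (Subtype.ext h)), card_univ, Fintype.card_fin]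

noncomputable def Ψ (hP : P.parts.val.map Finset.card = Multiset.map c univ.val)
    (σ : SP c P) : {f : (Σ i : Fin k, Fin (c i)) ≃ Fin n // pt hc f = P} :=
  ⟨ΨF σ, pt_ΨF hc hP σ⟩

lemma Ψ_bijective (hP : P.parts.val.map Finset.card = Multiset.map c univ.val) :
    Function.Bijective (Ψ hc hP) := by
  constructor
  · rintro ⟨b, e⟩ ⟨b', e'⟩ h
    have hFF : ΨF (⟨b, e⟩ : SP c P) = ΨF ⟨b', e'⟩ := congrArg Subtype.val h
    have hG : ∀ x, ΨG (⟨b, e⟩ : SP c P) x = ΨG ⟨b', e'⟩ x := fun x =>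
      congrArg (fun (t : (Σ i : Fin k, Fin (c i)) ≃ Fin n) => t x) hFF
    have hb : b = b' := by
      apply Subtype.ext
      apply Equiv.ext
      intro i
      apply Subtype.ext
      rw [← blk_ΨF (⟨b, e⟩ : SP c P) i, ← blk_ΨF (⟨b', e'⟩ : SP c P) i, hFF]
    subst hb
    have he : e = e' := by
      funext i
      apply Equiv.ext
      intro j
      exact Subtype.ext (hG ⟨i, j⟩)
    rw [he]
  · rintro ⟨f, hf⟩
    have hparts : P.parts = univ.image (blk f) := by rw [← hf]; rfl
    have hmem : ∀ i, blk f i ∈ P.parts := fun i => by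
      rw [hparts]; exact mem_image_of_mem _ (mem_univ i)
    set b0 : Fin k → {t // t ∈ P.parts} := fun i => ⟨blk f i, hmem i⟩ with hb0def
    have hb0 : Function.Bijective b0 := by
      rw [Fintype.bijective_iff_injective_and_card]
      refine ⟨fun i i' hii => blk_injective hc f (Subtype.ext_iff.mp hii), ?_⟩
      rw [Fintype.card_fin, Fintype.card_coe, parts_card P hP]
    set bE := Equiv.ofBijective b0 hb0 with hbEdef
    have hbE : ∀ i, (bE i).1 = blk f i := fun i => rfl
    refine ⟨⟨⟨bE, fun i => by rw [hbE i, card_blk]⟩, fun i =>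
      Equiv.ofBijective (fun j => ⟨f ⟨i, j⟩, by
        rw [hbE i]; exact mem_image_of_mem _ (mem_univ j)⟩) ?_⟩, ?_⟩
    · constructor
      · intro j j' hjj
        have := f.injective (Subtype.ext_iff.mp hjj)
        simpa using sigma_mk_injective this
      · rintro ⟨x, hx⟩
        rw [hbE i] at hx
        obtain ⟨j, _, hj⟩ := mem_image.mp hx
        exact ⟨j, Subtype.ext hj⟩
    · apply Subtype.ext
      apply Equiv.ext
      rintro ⟨i, j⟩
      rfl

end Fiber

section Count

lemma card_subtype_fun {β : Type*} [Fintype β] [DecidableEq β] (g : β → ℕ) (s : ℕ) :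
    Fintype.card {x : β // g x = s} = (Multiset.map g (univ : Finset β).val).count s := by
  rw [Fintype.card_subtype]
  rw [Multiset.count_map g univ.val s]
  rw [Finset.card_def, Finset.filter_val (p := fun x => g x = s) univ,
    ← Multiset.countP_eq_card_filter (p := fun x => g x = s) univ.val,
    ← Multiset.countP_eq_card_filter (p := fun x => s = g x) univ.val]
  exact Multiset.countP_congr (p := fun x => g x = s) (p' := fun x => s = g x) rfl
    (fun x _ => propext ⟨Eq.symm, Eq.symm⟩)

lemma card_subtype_coe {α : Type*} [Fintype α] [DecidableEq α] (t : Finset α)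
    (g : α → ℕ) (s : ℕ) :
    Fintype.card {x : {a // a ∈ t} // g x.1 = s} = (Multiset.map g t.val).count s := by
  rw [Fintype.card_congr (Equiv.subtypeSubtypeEquivSubtypeInter
    (fun a => a ∈ t) (fun a => g a = s))]
  rw [Fintype.card_subtype]
  rw [show (univ.filter fun a => a ∈ t ∧ g a = s) = t.filter fun a => g a = s by
      ext a; simp [Finset.mem_filter]]
  rw [Multiset.count_map g t.val s]
  rw [Finset.card_def, Finset.filter_val (p := fun x => g x = s) t,
    ← Multiset.countP_eq_card_filter (p := fun x => g x = s) t.val,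
    ← Multiset.countP_eq_card_filter (p := fun x => s = g x) t.val]
  exact Multiset.countP_congr (p := fun x => g x = s) (p' := fun x => s = g x) rfl
    (fun x _ => propext ⟨Eq.symm, Eq.symm⟩)

variable {n k : ℕ} {c : Fin k → ℕ}

lemma card_SP (hc : ∀ i : Fin k, 0 < c i) (P : Finpartition (univ : Finset (Fin n))) :
    Fintype.card (SP c P) = Fintype.card (BP c P) * ∏ i, (c i).factorial := by
  have hsig : Fintype.card (SP c P)
      = ∑ b : BP c P, Fintype.card (∀ i : Fin k, Fin (c i) ≃ {x // x ∈ (b.1 i).1}) :=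
    Fintype.card_sigma
  rw [hsig]
  have h : ∀ b : BP c P,
      Fintype.card (∀ i : Fin k, Fin (c i) ≃ {x // x ∈ (b.1 i).1}) = ∏ i, (c i).factorial := by
    intro b
    rw [Fintype.card_pi]
    refine Finset.prod_congr rfl fun i _ => ?_
    have hcard : Fintype.card {x // x ∈ (b.1 i).1} = c i := by
      rw [Fintype.card_coe]; exact b.2 i
    rw [Fintype.card_equiv (Fintype.equivOfCardEq (by rw [Fintype.card_fin, hcard])),
      Fintype.card_fin]
  rw [Finset.sum_congr rfl fun b _ => h b, Finset.sum_const, smul_eq_mul, card_univ]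

lemma card_fiber (hc : ∀ i : Fin k, 0 < c i) (P : Finpartition (univ : Finset (Fin n)))
    (hP : P.parts.val.map Finset.card = Multiset.map c univ.val) :
    Fintype.card {f : (Σ i : Fin k, Fin (c i)) ≃ Fin n // pt hc f = P}
      = Fintype.card (BP c P) * ∏ i, (c i).factorial := by
  rw [← Fintype.card_congr (Equiv.ofBijective _ (Ψ_bijective hc hP))]
  exact card_SP hc P

lemma card_BP (P : Finpartition (univ : Finset (Fin n)))
    (hP : P.parts.val.map Finset.card = Multiset.map c univ.val) :
    Fintype.card (BP c P)
      = ∏ s ∈ (Multiset.map c univ.val).toFinset,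
          ((Multiset.map c univ.val).count s).factorial := by
  set M : Multiset ℕ := Multiset.map c univ.val with hM
  have hfmem : ∀ i : Fin k, c i ∈ M.toFinset := fun i => by
    rw [Multiset.mem_toFinset]
    exact Multiset.mem_map_of_mem c (mem_univ i)
  have hgmem : ∀ p : {t // t ∈ P.parts}, (p.1.card : ℕ) ∈ M.toFinset := fun p => by
    rw [Multiset.mem_toFinset, ← hP]
    exact Multiset.mem_map_of_mem _ p.2
  set ftil : Fin k → {s // s ∈ M.toFinset} := fun i => ⟨c i, hfmem i⟩ with hftil
  set gtil : {t // t ∈ P.parts} → {s // s ∈ M.toFinset} := fun p => ⟨p.1.card, hgmem p⟩ with hgtil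
  have hfib1 : ∀ s : {s // s ∈ M.toFinset},
      Fintype.card {i : Fin k // ftil i = s} = M.count s.1 := by
    intro s
    rw [Fintype.card_congr (Equiv.subtypeEquivRight (q := fun i => c i = s.1)
      (fun i => Subtype.ext_iff))]
    exact card_subtype_fun c s.1
  have hfib2 : ∀ s : {s // s ∈ M.toFinset},
      Fintype.card {p : {t // t ∈ P.parts} // gtil p = s} = M.count s.1 := by
    intro s
    rw [Fintype.card_congr (Equiv.subtypeEquivRight (q := fun p => p.1.card = s.1)
      (fun p => Subtype.ext_iff))]
    rw [card_subtype_coe P.parts Finset.card s.1, hP]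
  have hcongr : Fintype.card (BP c P)
      = Fintype.card (∀ s : {s // s ∈ M.toFinset},
          {i : Fin k // ftil i = s} ≃ {p : {t // t ∈ P.parts} // gtil p = s}) := by
    apply Fintype.card_congr
    exact (Equiv.subtypeEquivRight (fun (e : Fin k ≃ {t // t ∈ P.parts}) =>
      forall_congr' fun i => (@Subtype.ext_iff _ _ (gtil (e i)) (ftil i)).symm)).trans
      (equivCommEquiv ftil gtil)
  calc Fintype.card (BP c P)
      = Fintype.card (∀ s : {s // s ∈ M.toFinset},
          {i : Fin k // ftil i = s} ≃ {p : {t // t ∈ P.parts} // gtil p = s}) := hcongr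
    _ = ∏ s : {s // s ∈ M.toFinset},
          Fintype.card ({i : Fin k // ftil i = s} ≃ {p : {t // t ∈ P.parts} // gtil p = s}) :=
        Fintype.card_pi
    _ = ∏ s : {s // s ∈ M.toFinset}, (M.count s.1).factorial := by
        refine Finset.prod_congr rfl fun s _ => ?_
        rw [Fintype.card_equiv (Fintype.equivOfCardEq ((hfib1 s).trans (hfib2 s).symm)),
          hfib1 s]
    _ = ∏ s ∈ M.toFinset, (M.count s).factorial :=
        Finset.prod_coe_sort M.toFinset fun s => (M.count s).factorial

end Count
end Stmt18Aux

/-- **Multiplicity of a fixed block profile.** The number of set partitions of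
an `n`-element set whose multiset of block cardinalities equals `lam` is
`n! / ((∏ over parts s of lam, s!) * (∏ over distinct sizes s, m_s!))`,
where `m_s` is the multiplicity of the part `s` in `lam`. -/
theorem stmt18 {n : ℕ} (lam : Multiset ℕ)
    (hpos : ∀ s ∈ lam, 0 < s) (hsum : lam.sum = n) :
    Nat.card {P : Finpartition (Finset.univ : Finset (Fin n)) //
        P.parts.val.map Finset.card = lam} =
      n.factorial /
        ((lam.map Nat.factorial).prod *
          lam.toFinset.prod fun s => (lam.count s).factorial) := by
  classical
  open Stmt18Aux Finset in
  set k := lam.toList.length with hk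
  set c : Fin k → ℕ := lam.toList.get with hcdef
  have hL : Multiset.map c (univ : Finset (Fin k)).val = lam := by
    rw [Fin.univ_val_map, List.ofFn_get, Multiset.coe_toList]
  have hc : ∀ i, 0 < c i := fun i => hpos _ (by
    rw [← Multiset.coe_toList lam]
    exact List.get_mem lam.toList i)
  have hsumc : ∑ i, c i = n := by
    rw [show (∑ i, c i) = (Multiset.map c (univ : Finset (Fin k)).val).sum from rfl, hL, hsum]
  have hcardD : Fintype.card (Σ i : Fin k, Fin (c i)) = n := by
    simp [hsumc]
  have hT : Fintype.card ((Σ i : Fin k, Fin (c i)) ≃ Fin n) = n.factorial := by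
    rw [Fintype.card_equiv ((Fintype.equivFinOfCardEq hcardD)), hcardD]
  set K : ℕ := (lam.map Nat.factorial).prod *
      lam.toFinset.prod fun s => (lam.count s).factorial with hKdef
  have hprodfact : (∏ i, (c i).factorial) = (lam.map Nat.factorial).prod := by
    rw [← hL, Multiset.map_map]
    rfl
  set X := {P : Finpartition (Finset.univ : Finset (Fin n)) //
      P.parts.val.map Finset.card = lam} with hX
  set Φ : ((Σ i : Fin k, Fin (c i)) ≃ Fin n) → X := fun f =>
    ⟨pt hc f, by rw [profile_pt hc f, hL]⟩ with hΦ
  have hfib : ∀ P : X,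
      Fintype.card {f : (Σ i : Fin k, Fin (c i)) ≃ Fin n // Φ f = P} = K := by
    intro P
    have hP : P.1.parts.val.map Finset.card = Multiset.map c univ.val := by
      rw [hL]; exact P.2
    have h1 : Fintype.card {f : (Σ i : Fin k, Fin (c i)) ≃ Fin n // Φ f = P}
        = Fintype.card {f : (Σ i : Fin k, Fin (c i)) ≃ Fin n // pt hc f = P.1} := by
      apply Fintype.card_congr
      apply Equiv.subtypeEquivRight
      intro f
      constructor
      · intro h; rw [← h]
      · intro h; exact Subtype.ext h
    rw [h1, card_fiber hc P.1 hP, card_BP P.1 hP, hL, hprodfact, mul_comm]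
  have hmain : n.factorial = Nat.card X * K := by
    rw [← hT, Fintype.card_congr (Equiv.sigmaFiberEquiv Φ).symm, Fintype.card_sigma,
      Finset.sum_congr rfl fun P _ => hfib P, Finset.sum_const, smul_eq_mul, card_univ,
      Nat.card_eq_fintype_card]
  have hKpos : 0 < K := by
    apply Nat.mul_pos
    · apply Multiset.prod_pos
      intro x hx
      obtain ⟨y, _, rfl⟩ := Multiset.mem_map.mp hx
      exact Nat.factorial_pos y
    · exact Finset.prod_pos fun s _ => Nat.factorial_pos _
  exact (Nat.div_eq_of_eq_mul_left hKpos hmain).symm
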